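/- For every natural number k ≥ 2, the following identity holds: 3^{k-1}·C_{k-1} + ∑_{(i,j,l)} (3^{i-1}·C_{i-1})·(3^{j-1}·C_{j-1})·(3^{l-1}·C_{l-1}) = 3^{k-2}·(C_k + 2·C_{k-1}), where the sum runs over all triples (i, j, l) of natural numbers with i, j, l ≥ 1 and i + j + l = k + 1. -/

import Mathlib

open Finset

private lemma sum_tuple3 {M : Type*} [AddCommMonoid M] (f : ℕ → ℕ → ℕ → M) (n : ℕ) :
    ∑ p ∈ Finset.Nat.antidiagonalTuple 3 n, f (p 0) (p 1) (p 2)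
      = ∑ ab ∈ Finset.HasAntidiagonal.antidiagonal n, ∑ cd ∈ Finset.HasAntidiagonal.antidiagonal ab.2,
          f ab.1 cd.1 cd.2 := by
  rw [Finset.sum_sigma']
  refine Finset.sum_nbij' (fun p => ⟨(p 0, p 1 + p 2), (p 1, p 2)⟩)
    (fun x => ![x.1.1, x.2.1, x.2.2]) ?_ ?_ ?_ ?_ ?_
  · intro p hp
    rw [Finset.Nat.mem_antidiagonalTuple, Fin.sum_univ_three] at hp
    simp [Finset.mem_sigma, Finset.HasAntidiagonal.mem_antidiagonal, ← hp, add_assoc]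
  · intro x hx
    simp only [Finset.mem_sigma, Finset.HasAntidiagonal.mem_antidiagonal] at hx
    simp only [Finset.Nat.mem_antidiagonalTuple, Fin.sum_univ_three]
    simp [hx.2, ← hx.1, add_assoc]
  · intro p _
    funext i
    fin_cases i <;> simp
  · intro x hx
    simp only [Finset.mem_sigma, Finset.HasAntidiagonal.mem_antidiagonal] at hx
    simp [Sigma.ext_iff, hx.2]
  · intro p _
    simp

private lemma catalan_conv (n : ℕ) :
    (∑ ab ∈ Finset.HasAntidiagonal.antidiagonal n, catalan ab.1 * catalan (ab.2 + 1)) + catalan (n + 1)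
      = catalan (n + 2) := by
  rw [show n + 2 = n + 1 + 1 from rfl, catalan_succ' (n + 1),
    Finset.Nat.sum_antidiagonal_succ']
  simp [add_comm]

/-- For every `k ≥ 2`,
`3^(k-1) C_(k-1) + ∑_{i+j+l = k+1, i,j,l ≥ 1} 3^(i-1) C_(i-1) · 3^(j-1) C_(j-1) · 3^(l-1) C_(l-1)
  = 3^(k-2) (C_k + 2 C_(k-1))`. -/
theorem main_count_identity (k : ℕ) (hk : 2 ≤ k) :
    3 ^ (k - 1) * catalan (k - 1) +
      ∑ p ∈ (Finset.Nat.antidiagonalTuple 3 (k + 1)).filter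
          (fun p => 1 ≤ p 0 ∧ 1 ≤ p 1 ∧ 1 ≤ p 2),
        (3 ^ (p 0 - 1) * catalan (p 0 - 1)) * (3 ^ (p 1 - 1) * catalan (p 1 - 1)) *
          (3 ^ (p 2 - 1) * catalan (p 2 - 1)) =
    3 ^ (k - 2) * (catalan k + 2 * catalan (k - 1)) := by
  obtain ⟨n, rfl⟩ : ∃ n, k = n + 2 := ⟨k - 2, by omega⟩
  simp only [show n + 2 - 1 = n + 1 from rfl, show n + 2 - 2 = n from rfl]
  have hstep : ∑ p ∈ (Finset.Nat.antidiagonalTuple 3 (n + 2 + 1)).filter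
          (fun p => 1 ≤ p 0 ∧ 1 ≤ p 1 ∧ 1 ≤ p 2),
        (3 ^ (p 0 - 1) * catalan (p 0 - 1)) * (3 ^ (p 1 - 1) * catalan (p 1 - 1)) *
          (3 ^ (p 2 - 1) * catalan (p 2 - 1))
      = ∑ q ∈ Finset.Nat.antidiagonalTuple 3 n,
          (3 ^ q 0 * catalan (q 0)) * (3 ^ q 1 * catalan (q 1)) * (3 ^ q 2 * catalan (q 2)) := by
    refine Finset.sum_nbij' (fun p i => p i - 1) (fun q i => q i + 1) ?_ ?_ ?_ ?_ ?_
    · intro p hp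
      rw [Finset.mem_filter, Finset.Nat.mem_antidiagonalTuple, Fin.sum_univ_three] at hp
      simp only [Finset.Nat.mem_antidiagonalTuple, Fin.sum_univ_three]
      omega
    · intro q hq
      rw [Finset.Nat.mem_antidiagonalTuple, Fin.sum_univ_three] at hq
      simp only [Finset.mem_filter, Finset.Nat.mem_antidiagonalTuple, Fin.sum_univ_three]
      refine ⟨by omega, by omega, by omega, by omega⟩
    · intro p hp
      rw [Finset.mem_filter, Finset.Nat.mem_antidiagonalTuple, Fin.sum_univ_three] at hp
      funext i
      fin_cases i <;> simp <;> omega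
    · intro q _
      funext i
      simp
    · intro p _
      rfl
  rw [hstep]
  have hstep2 : ∑ q ∈ Finset.Nat.antidiagonalTuple 3 n,
          (3 ^ q 0 * catalan (q 0)) * (3 ^ q 1 * catalan (q 1)) * (3 ^ q 2 * catalan (q 2))
      = 3 ^ n * ∑ q ∈ Finset.Nat.antidiagonalTuple 3 n,
          catalan (q 0) * catalan (q 1) * catalan (q 2) := by
    rw [Finset.mul_sum]
    refine Finset.sum_congr rfl fun q hq => ?_
    rw [Finset.Nat.mem_antidiagonalTuple, Fin.sum_univ_three] at hq
    rw [← hq]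
    ring
  rw [hstep2]
  have hstep3 : ∑ q ∈ Finset.Nat.antidiagonalTuple 3 n,
          catalan (q 0) * catalan (q 1) * catalan (q 2)
      = ∑ ab ∈ Finset.HasAntidiagonal.antidiagonal n, catalan ab.1 * catalan (ab.2 + 1) := by
    rw [sum_tuple3 (fun a b c => catalan a * catalan b * catalan c)]
    refine Finset.sum_congr rfl fun ab _ => ?_
    rw [catalan_succ', Finset.mul_sum]
    exact Finset.sum_congr rfl fun cd _ => by ring
  rw [hstep3, ← catalan_conv n]
  ring
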